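/- For every real x, the error function admits the series representation erf(x) = (x/√π)·[1 − x²/30] + (x/√π)·[1 + 11x²/30 + x⁴/15]·e^{−x²} + (x⁷/(60√π))·Σ_{k=0}^∞ (−1)^k (2k+1)(2k+3)·(k+1)!·x^{2k} / [3·(2k+7)·∏_{r=2}^{k+1} (2·Σ_{i=2}^r i)], where the empty product (k = 0) equals 1, and the series converges for all x. -/

import Mathlib

open Real intervalIntegral

/-- The error function. -/
noncomputable def erf (x : ℝ) : ℝ :=
  (2 / Real.sqrt π) * ∫ t in (0:ℝ)..x, Real.exp (-t ^ 2)

private lemma sum_Icc_two (r : ℕ) :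
    ∑ i ∈ Finset.Icc 2 (r + 2), (i : ℝ) = ((r:ℝ) + 2) * ((r:ℝ) + 3) / 2 - 1 := by
  induction r with
  | zero => norm_num
  | succ n ih =>
      rw [show n + 1 + 2 = (n + 2) + 1 from rfl,
        Finset.sum_Icc_succ_top (by omega : 2 ≤ n + 2 + 1)]
      rw [ih]; push_cast; ring

private lemma prod_denom (k : ℕ) :
    ∏ r ∈ Finset.Icc 2 (k + 1), (2 * ∑ i ∈ Finset.Icc 2 r, (i : ℝ)) =
      (Nat.factorial k : ℝ) * (Nat.factorial (k + 3) : ℝ) / 6 := by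
  induction k with
  | zero =>
      rw [Finset.Icc_eq_empty (by omega)]
      simp [Nat.factorial]
  | succ n ih =>
      rw [show n + 1 + 1 = (n + 1) + 1 from rfl,
        Finset.prod_Icc_succ_top (by omega : 2 ≤ n + 1 + 1)]
      rw [ih, sum_Icc_two n]
      rw [show n + 1 + 3 = (n + 3) + 1 from rfl, Nat.factorial_succ (n + 3),
        Nat.factorial_succ n]
      push_cast
      ring

private lemma expSum (y : ℝ) :
    HasSum (fun n : ℕ => (-1:ℝ)^n * y^(2*n) / (Nat.factorial n : ℝ)) (Real.exp (-y^2)) := by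
  have h := NormedSpace.expSeries_div_hasSum_exp (-y^2)
  rw [← Real.exp_eq_exp_ℝ] at h
  have heq : (fun n : ℕ => (-y^2:ℝ)^n / (Nat.factorial n : ℝ))
      = fun n : ℕ => (-1:ℝ)^n * y^(2*n) / (Nat.factorial n : ℝ) := by
    funext n
    rw [neg_pow, ← pow_mul]
  rwa [heq] at h

private noncomputable def Fe (y : ℝ) : ℝ :=
  ∑' n : ℕ, (-1:ℝ)^n * y^(2*n+1) / ((Nat.factorial n : ℝ) * (2*(n:ℝ)+1))

private lemma Fe_hasDerivAt (y : ℝ) : HasDerivAt Fe (Real.exp (-y^2)) y := by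
  have key : HasDerivAt
      (fun z : ℝ => ∑' n : ℕ, (-1:ℝ)^n * z^(2*n+1) / ((Nat.factorial n : ℝ) * (2*(n:ℝ)+1)))
      (∑' n : ℕ, (-1:ℝ)^n * y^(2*n) / (Nat.factorial n : ℝ)) y := by
    apply hasDerivAt_tsum_of_isPreconnected
      (u := fun n : ℕ => ((|y|+1)^2)^n / (Nat.factorial n : ℝ))
      (t := Metric.ball (0:ℝ) (|y|+1)) (y₀ := (0:ℝ))
      (g' := fun (n : ℕ) (z : ℝ) => (-1:ℝ)^n * z^(2*n) / (Nat.factorial n : ℝ))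
    · exact Real.summable_pow_div_factorial _
    · exact Metric.isOpen_ball
    · exact (convex_ball _ _).isPreconnected
    · intro n z hz
      have h1 : HasDerivAt (fun w : ℝ => w ^ (2*n+1)) (((2*n+1 : ℕ) : ℝ) * z^(2*n)) z := by
        simpa using hasDerivAt_pow (2*n+1) z
      have h2 := (h1.const_mul ((-1:ℝ)^n)).div_const ((Nat.factorial n : ℝ) * (2*(n:ℝ)+1))
      refine h2.congr_deriv ?_
      have hne : ((2:ℝ)*(n:ℝ)+1) ≠ 0 := by positivity
      have hfac : (Nat.factorial n : ℝ) ≠ 0 := Nat.cast_ne_zero.mpr n.factorial_ne_zero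
      push_cast
      field_simp
    · intro n z hz
      rw [Metric.mem_ball, dist_zero_right, Real.norm_eq_abs] at hz
      have h1 : ‖(-1:ℝ)^n * z^(2*n) / (Nat.factorial n : ℝ)‖ = |z|^(2*n) / (Nat.factorial n : ℝ) := by
        rw [norm_div, norm_mul, norm_pow, norm_pow, Real.norm_eq_abs, Real.norm_eq_abs,
          Real.norm_eq_abs, abs_neg, abs_one, one_pow, one_mul,
          abs_of_pos (by positivity : (0:ℝ) < (Nat.factorial n : ℝ))]
      rw [h1, show ((|y|+1)^2)^n = (|y|+1)^(2*n) from by rw [← pow_mul]]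
      gcongr
    · exact Metric.mem_ball_self (by positivity)
    · refine summable_zero.congr fun n => ?_
      simp [zero_pow (show 2*n+1 ≠ 0 by omega)]
    · rw [Metric.mem_ball, dist_zero_right, Real.norm_eq_abs]; linarith [abs_nonneg y]
  have h2 := key
  rw [(expSum y).tsum_eq] at h2
  exact h2

private lemma Fe_eq (y : ℝ) : Fe y = ∫ t in (0:ℝ)..y, Real.exp (-t^2) := by
  have hc : Continuous fun t : ℝ => Real.exp (-t^2) := by continuity
  have hG : ∀ z : ℝ, HasDerivAt (fun w => ∫ t in (0:ℝ)..w, Real.exp (-t^2)) (Real.exp (-z^2)) z := by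
    intro z
    exact intervalIntegral.integral_hasDerivAt_right (hc.intervalIntegrable _ _)
      (hc.stronglyMeasurableAtFilter _ _) hc.continuousAt
  have hH' : ∀ z : ℝ, HasDerivAt (fun w => Fe w - ∫ t in (0:ℝ)..w, Real.exp (-t^2)) 0 z := by
    intro z
    exact (Fe_hasDerivAt z).sub (hG z) |>.congr_deriv (by simp)
  have hdiff : Differentiable ℝ (fun w => Fe w - ∫ t in (0:ℝ)..w, Real.exp (-t^2)) :=
    fun z => (hH' z).differentiableAt
  have hconst := is_const_of_deriv_eq_zero hdiff (fun z => (hH' z).deriv) y 0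
  have h0 : Fe 0 = 0 := by
    have hz : ∀ n : ℕ, (-1:ℝ)^n * (0:ℝ)^(2*n+1) / ((Nat.factorial n : ℝ) * (2*(n:ℝ)+1)) = 0 := by
      intro n; rw [zero_pow (show 2*n+1 ≠ 0 by omega)]; ring
    simp only [Fe]
    rw [tsum_congr hz, tsum_zero]
  simp only [h0, intervalIntegral.integral_same, sub_zero, zero_sub] at hconst
  linarith [hconst]

private noncomputable def aT (x : ℝ) (k : ℕ) : ℝ :=
  (-1:ℝ)^k * ((2*(k:ℝ)+1) * (2*(k:ℝ)+3) * ((k:ℝ)+1) * 2) * (x^2)^k /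
    ((2*(k:ℝ)+7) * (Nat.factorial (k+3) : ℝ))

private lemma term_eq (x : ℝ) (k : ℕ) :
    (-1 : ℝ) ^ k * (2 * (k : ℝ) + 1) * (2 * (k : ℝ) + 3) *
          (Nat.factorial (k + 1) : ℝ) * x ^ (2 * k) /
        (3 * (2 * (k : ℝ) + 7) *
          ∏ r ∈ Finset.Icc 2 (k + 1), (2 * ∑ i ∈ Finset.Icc 2 r, (i : ℝ)))
      = aT x k := by
  have h1 : (Nat.factorial (k+1) : ℝ) = ((k:ℝ)+1) * (Nat.factorial k : ℝ) := by
    rw [Nat.factorial_succ]; push_cast; ring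
  have hk : (Nat.factorial k : ℝ) ≠ 0 := Nat.cast_ne_zero.mpr k.factorial_ne_zero
  have hk3 : (Nat.factorial (k+3) : ℝ) ≠ 0 := Nat.cast_ne_zero.mpr (k+3).factorial_ne_zero
  have h7 : (2*(k:ℝ)+7) ≠ 0 := by positivity
  rw [prod_denom, aT, h1, show x^(2*k) = (x^2)^k from pow_mul x 2 k]
  field_simp
  ring

private lemma aT_bound (x : ℝ) (k : ℕ) : ‖aT x k‖ ≤ 6 * (x^2)^k / (Nat.factorial k : ℝ) := by
  have hx : (0:ℝ) ≤ (x^2)^k := by positivity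
  have hk : (0:ℝ) < (Nat.factorial k : ℝ) := by exact_mod_cast Nat.factorial_pos k
  have hk3 : (0:ℝ) < (Nat.factorial (k+3) : ℝ) := by exact_mod_cast Nat.factorial_pos (k+3)
  have h7 : (0:ℝ) < 2*(k:ℝ)+7 := by positivity
  have habs : ‖aT x k‖ = ((2*(k:ℝ)+1) * (2*(k:ℝ)+3) * ((k:ℝ)+1) * 2) * (x^2)^k /
      ((2*(k:ℝ)+7) * (Nat.factorial (k+3) : ℝ)) := by
    rw [aT, Real.norm_eq_abs, abs_div, abs_mul, abs_mul, abs_pow, abs_neg, abs_one, one_pow,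
      one_mul, abs_of_nonneg (by positivity : (0:ℝ) ≤ (2*(k:ℝ)+1) * (2*(k:ℝ)+3) * ((k:ℝ)+1) * 2),
      abs_of_nonneg hx, abs_of_pos (by positivity : (0:ℝ) < (2*(k:ℝ)+7) * (Nat.factorial (k+3):ℝ))]
  rw [habs, div_le_div_iff₀ (by positivity) hk]
  have hf3 : (Nat.factorial (k+3) : ℝ)
      = ((k:ℝ)+3) * (((k:ℝ)+2) * (((k:ℝ)+1) * (Nat.factorial k : ℝ))) := by
    rw [show k+3 = (k+2)+1 from rfl, Nat.factorial_succ, show k+2 = (k+1)+1 from rfl,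
      Nat.factorial_succ, Nat.factorial_succ]
    push_cast; ring
  rw [hf3]
  have hkk : (0:ℝ) ≤ (k:ℝ) := Nat.cast_nonneg k
  nlinarith [mul_nonneg hkk hx, mul_nonneg (mul_nonneg hkk hkk) hx,
    mul_nonneg (mul_nonneg (mul_nonneg hkk hkk) hkk) hx, mul_pos hk h7,
    mul_nonneg (mul_nonneg hkk hx) hk.le, mul_nonneg (mul_nonneg (mul_nonneg hkk hkk) hx) hk.le,
    mul_nonneg (mul_nonneg (mul_nonneg (mul_nonneg hkk hkk) hkk) hx) hk.le,
    mul_nonneg hx hk.le]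

private noncomputable def gA (x : ℝ) : ℕ → ℝ
  | 0 => 0
  | m+1 => 11/30 * x^3 * ((-1:ℝ)^m * x^(2*m) / (Nat.factorial m : ℝ))

private noncomputable def gB (x : ℝ) : ℕ → ℝ
  | 0 => 0
  | 1 => 0
  | m+2 => 1/15 * x^5 * ((-1:ℝ)^m * x^(2*m) / (Nat.factorial m : ℝ))

private noncomputable def gC (x : ℝ) : ℕ → ℝ
  | 0 => 0
  | 1 => 0
  | 2 => 0
  | m+3 => x^7/60 * aT x m

private lemma pointwise (x : ℝ) (n : ℕ) :
    (if n = 0 then x else 0) + (if n = 1 then -(x^3)/30 else 0)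
      + x * ((-1:ℝ)^n * x^(2*n) / (Nat.factorial n : ℝ))
      + gA x n + gB x n + gC x n
    = 2 * ((-1:ℝ)^n * x^(2*n+1) / ((Nat.factorial n : ℝ) * (2*(n:ℝ)+1))) := by
  match n with
  | 0 => norm_num [gA, gB, gC, Nat.factorial]; ring
  | 1 => norm_num [gA, gB, gC, Nat.factorial]; ring
  | 2 => norm_num [gA, gB, gC, Nat.factorial]; ring
  | (m+3) =>
      have hf1 : (Nat.factorial (m+1) : ℝ) = ((m:ℝ)+1) * (Nat.factorial m : ℝ) := by
        rw [Nat.factorial_succ]; push_cast; ring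
      have hf2 : (Nat.factorial (m+2) : ℝ) = (((m:ℝ)+2) * ((m:ℝ)+1)) * (Nat.factorial m : ℝ) := by
        rw [show m+2 = (m+1)+1 from rfl, Nat.factorial_succ, Nat.factorial_succ]; push_cast; ring
      have hf3 : (Nat.factorial (m+3) : ℝ)
          = (((m:ℝ)+3) * ((m:ℝ)+2) * ((m:ℝ)+1)) * (Nat.factorial m : ℝ) := by
        rw [show m+3 = (m+2)+1 from rfl, Nat.factorial_succ, show m+2 = (m+1)+1 from rfl,
          Nat.factorial_succ, Nat.factorial_succ]
        push_cast; ring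
      have hm : (Nat.factorial m : ℝ) ≠ 0 := Nat.cast_ne_zero.mpr m.factorial_ne_zero
      have hm1 : ((m:ℝ)+1) ≠ 0 := by positivity
      have hm2 : ((m:ℝ)+2) ≠ 0 := by positivity
      have hm3 : ((m:ℝ)+3) ≠ 0 := by positivity
      have h7 : (2*(m:ℝ)+7) ≠ 0 := by positivity
      have h27 : (2*((m:ℝ)+3)+1) ≠ 0 := by positivity
      simp only [gA, gB, gC, aT, show m+3 = (m+2)+1 from rfl, show m+2 = (m+1)+1 from rfl]
      rw [show (m+1)+1+1 = m+3 from rfl] at *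
      simp only [hf1, hf2, hf3]
      push_cast
      field_simp
      ring

/-- New series for the error function based on the second order spline approximation. -/
theorem erf_series_order_two (x : ℝ) :
    Summable (fun k : ℕ =>
      (-1 : ℝ) ^ k * (2 * (k : ℝ) + 1) * (2 * (k : ℝ) + 3) *
          (Nat.factorial (k + 1) : ℝ) * x ^ (2 * k) /
        (3 * (2 * (k : ℝ) + 7) *
          ∏ r ∈ Finset.Icc 2 (k + 1), (2 * ∑ i ∈ Finset.Icc 2 r, (i : ℝ)))) ∧
    erf x = (x / Real.sqrt π) * (1 - x ^ 2 / 30) +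
      (x / Real.sqrt π) * (1 + 11 * x ^ 2 / 30 + x ^ 4 / 15) * Real.exp (-x ^ 2) +
      (x ^ 7 / (60 * Real.sqrt π)) *
        ∑' k : ℕ,
          (-1 : ℝ) ^ k * (2 * (k : ℝ) + 1) * (2 * (k : ℝ) + 3) *
              (Nat.factorial (k + 1) : ℝ) * x ^ (2 * k) /
            (3 * (2 * (k : ℝ) + 7) *
              ∏ r ∈ Finset.Icc 2 (k + 1), (2 * ∑ i ∈ Finset.Icc 2 r, (i : ℝ))) := by
  have hsumaT : Summable (aT x) := by
    refine Summable.of_norm (Summable.of_nonneg_of_le (fun k => norm_nonneg _) (aT_bound x) ?_)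
    simpa [mul_div_assoc] using (Real.summable_pow_div_factorial (x^2)).mul_left 6
  have hsummable : Summable (fun k : ℕ =>
      (-1 : ℝ) ^ k * (2 * (k : ℝ) + 1) * (2 * (k : ℝ) + 3) *
          (Nat.factorial (k + 1) : ℝ) * x ^ (2 * k) /
        (3 * (2 * (k : ℝ) + 7) *
          ∏ r ∈ Finset.Icc 2 (k + 1), (2 * ∑ i ∈ Finset.Icc 2 r, (i : ℝ)))) :=
    hsumaT.congr fun k => (term_eq x k).symm
  refine ⟨hsummable, ?_⟩
  set S : ℝ := ∑' k : ℕ,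
      (-1 : ℝ) ^ k * (2 * (k : ℝ) + 1) * (2 * (k : ℝ) + 3) *
          (Nat.factorial (k + 1) : ℝ) * x ^ (2 * k) /
        (3 * (2 * (k : ℝ) + 7) *
          ∏ r ∈ Finset.Icc 2 (k + 1), (2 * ∑ i ∈ Finset.Icc 2 r, (i : ℝ))) with hSdef
  have haS : HasSum (aT x) S := by
    rw [hSdef, tsum_congr (term_eq x)]
    exact hsumaT.hasSum
  -- HasSum for the Fe-series at x
  have hcsum : Summable (fun n : ℕ =>
      (-1:ℝ)^n * x^(2*n+1) / ((Nat.factorial n : ℝ) * (2*(n:ℝ)+1))) := by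
    refine Summable.of_norm (Summable.of_nonneg_of_le (fun k => norm_nonneg _) (fun n => ?_)
      (((Real.summable_pow_div_factorial (x^2)).mul_left |x|)))
    have hfn : (0:ℝ) < (Nat.factorial n : ℝ) := by exact_mod_cast Nat.factorial_pos n
    have h2n : (0:ℝ) < 2*(n:ℝ)+1 := by positivity
    have h1 : ‖(-1:ℝ)^n * x^(2*n+1) / ((Nat.factorial n : ℝ) * (2*(n:ℝ)+1))‖
        = |x|^(2*n+1) / ((Nat.factorial n : ℝ) * (2*(n:ℝ)+1)) := by
      rw [Real.norm_eq_abs, abs_div, abs_mul, abs_pow, abs_pow, abs_neg, abs_one, one_pow,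
        one_mul, abs_of_pos (by positivity : (0:ℝ) < (Nat.factorial n : ℝ) * (2*(n:ℝ)+1))]
    rw [h1]
    have h2 : |x| * ((x^2)^n / (Nat.factorial n : ℝ)) = |x|^(2*n+1) / (Nat.factorial n : ℝ) := by
      rw [show (x^2:ℝ) = |x|^2 from (sq_abs x).symm, ← pow_mul, pow_succ]
      ring
    rw [h2]
    gcongr
    nlinarith [hfn, Nat.cast_nonneg (α := ℝ) n]
  have hFx : HasSum (fun n : ℕ =>
      (-1:ℝ)^n * x^(2*n+1) / ((Nat.factorial n : ℝ) * (2*(n:ℝ)+1))) (Fe x) := hcsum.hasSum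
  have hc2 := hFx.mul_left 2
  -- the right-hand side as a HasSum
  have hq1 := (expSum x).mul_left x
  have hgA : HasSum (gA x) (11/30 * x^3 * Real.exp (-x^2)) := by
    have h := (expSum x).mul_left (11/30 * x^3)
    have h' : HasSum (fun n => gA x (n+1))
        (11/30 * x^3 * Real.exp (-x^2) - ∑ i ∈ Finset.range 1, gA x i) := by
      simpa [gA] using h
    exact (hasSum_nat_add_iff' 1).mp h'
  have hgB : HasSum (gB x) (1/15 * x^5 * Real.exp (-x^2)) := by
    have h := (expSum x).mul_left (1/15 * x^5)
    have h' : HasSum (fun n => gB x (n+2))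
        (1/15 * x^5 * Real.exp (-x^2) - ∑ i ∈ Finset.range 2, gB x i) := by
      simpa [gB, Finset.sum_range_succ] using h
    exact (hasSum_nat_add_iff' 2).mp h'
  have hgC : HasSum (gC x) (x^7/60 * S) := by
    have h := haS.mul_left (x^7/60)
    have h' : HasSum (fun n => gC x (n+3))
        (x^7/60 * S - ∑ i ∈ Finset.range 3, gC x i) := by
      simpa [gC, Finset.sum_range_succ] using h
    exact (hasSum_nat_add_iff' 3).mp h'
  have htot := ((((((hasSum_ite_eq (0:ℕ) x).add
      (hasSum_ite_eq (1:ℕ) (-(x^3)/30))).add hq1).add hgA).add hgB).add hgC)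
  rw [show (fun n : ℕ => (if n = 0 then x else 0) + (if n = 1 then -(x^3)/30 else 0)
      + x * ((-1:ℝ)^n * x^(2*n) / (Nat.factorial n : ℝ))
      + gA x n + gB x n + gC x n)
    = fun n : ℕ => 2 * ((-1:ℝ)^n * x^(2*n+1) / ((Nat.factorial n : ℝ) * (2*(n:ℝ)+1)))
    from funext (pointwise x)] at htot
  have hkey := htot.unique hc2
  -- conclude
  have hπ : Real.sqrt π ≠ 0 := ne_of_gt (Real.sqrt_pos.mpr Real.pi_pos)
  unfold erf
  rw [← Fe_eq x]
  have hFe2 : Fe x = (x + -x^3/30 + x*Real.exp (-x^2) + 11/30*x^3*Real.exp (-x^2)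
      + 1/15*x^5*Real.exp (-x^2) + x^7/60*S)/2 := by linarith [hkey]
  rw [hFe2]
  field_simp
  ring
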